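/- Let A = ⊕_{ν≥0} A_ν be a positively graded finitely generated algebra over A_0. Then there exists d > 0 such that the Veronese subring A^{(d)} is generated over A_0 by its piece A_d, i.e., A^{(d)} = A_0[A_d]. -/

import Mathlib

namespace Stmt13Aux

variable {α : Type*}

lemma exists_le_card_eq (m : Multiset α) (n : ℕ) (hn : n ≤ Multiset.card m) :
    ∃ t ≤ m, Multiset.card t = n := by
  refine ⟨((m.toList.take n : List α) : Multiset α), ?_, ?_⟩
  · conv_rhs => rw [← m.coe_toList]
    exact Multiset.coe_le.mpr (List.take_sublist n m.toList).subperm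
  · simp [Multiset.coe_card, List.length_take, Multiset.length_toList]
    omega

lemma sum_map_eq (D : ℕ) (f : α → ℕ) (m : Multiset α)
    (hm : ∀ a ∈ m, f a ∈ Finset.Icc 1 D) :
    (m.map f).sum = ∑ v ∈ Finset.Icc 1 D, v * Multiset.card (m.filter (fun a => f a = v)) := by
  induction m using Multiset.induction with
  | empty => simp
  | cons a m ih =>
    have ha : f a ∈ Finset.Icc 1 D := hm a (Multiset.mem_cons_self a m)
    have ihm := ih (fun b hb => hm b (Multiset.mem_cons_of_mem hb))
    simp only [Multiset.map_cons, Multiset.sum_cons, Multiset.filter_cons]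
    rw [ihm]
    have key : ∀ v ∈ Finset.Icc 1 D,
        v * Multiset.card ((if f a = v then {a} else 0) + m.filter (fun b => f b = v))
        = (if f a = v then v else 0) + v * Multiset.card (m.filter (fun b => f b = v)) := by
      intro v hv
      by_cases h : f a = v <;> simp [h, Nat.mul_add, Nat.mul_succ] <;> ring
    rw [Finset.sum_congr rfl key, Finset.sum_add_distrib]
    have h2 : (∑ v ∈ Finset.Icc 1 D, if f a = v then v else 0) = f a := by
      rw [Finset.sum_ite_eq, if_pos ha]
    omega

lemma chunk (D : ℕ) (hD : 0 < D) (f : α → ℕ) (m : Multiset α)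
    (hm : ∀ a ∈ m, f a ∈ Finset.Icc 1 D)
    (hsum : D * D.factorial ≤ (m.map f).sum) :
    ∃ t ≤ m, (t.map f).sum = D.factorial := by
  have key : ∃ v ∈ Finset.Icc 1 D,
      D.factorial ≤ v * Multiset.card (m.filter (fun a => f a = v)) := by
    by_contra h
    push_neg at h
    have heq := sum_map_eq D f m hm
    have hlt : (m.map f).sum ≤ ∑ v ∈ Finset.Icc 1 D, (D.factorial - 1) := by
      rw [heq]
      exact Finset.sum_le_sum (fun v hv => by have := h v hv; omega)
    simp only [Finset.sum_const, Nat.card_Icc, smul_eq_mul] at hlt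
    have hfac : 1 ≤ D.factorial := D.factorial_pos
    have h3 : D * (D.factorial - 1) + D * 1 = D * D.factorial := by
      rw [← Nat.mul_add]; congr 1; omega
    simp only [Nat.add_sub_cancel] at hlt
    omega
  obtain ⟨v, hv, hvs⟩ := key
  simp only [Finset.mem_Icc] at hv
  have hvd : v ∣ D.factorial := Nat.dvd_factorial hv.1 hv.2
  have hc : D.factorial / v ≤ Multiset.card (m.filter (fun a => f a = v)) := by
    calc D.factorial / v ≤ v * Multiset.card (m.filter (fun a => f a = v)) / v :=
          Nat.div_le_div_right hvs
      _ = _ := Nat.mul_div_cancel_left _ hv.1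
  obtain ⟨t, ht, htc⟩ := exists_le_card_eq _ _ hc
  refine ⟨t, le_trans ht (Multiset.filter_le _ m), ?_⟩
  have hmem : ∀ a ∈ t, f a = v := by
    intro a ha
    have h4 : a ∈ m.filter (fun b => f b = v) := Multiset.mem_of_le ht ha
    exact (Multiset.mem_filter.mp h4).2
  rw [Multiset.map_congr rfl hmem, Multiset.map_const', htc, Multiset.sum_replicate,
    smul_eq_mul, Nat.div_mul_cancel hvd]

lemma chunks [DecidableEq α] (D : ℕ) (hD : 0 < D) (f : α → ℕ) : ∀ (k : ℕ) (m : Multiset α),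
    (∀ a ∈ m, f a ∈ Finset.Icc 1 D) →
    k * D.factorial + D * D.factorial ≤ (m.map f).sum →
    ∃ t ≤ m, (t.map f).sum = k * D.factorial := by
  intro k
  induction k with
  | zero => intro m _ _; exact ⟨0, zero_le, by simp⟩
  | succ k ih =>
    intro m hm hsum
    obtain ⟨c, hc, hcs⟩ := chunk D hD f m hm (by omega)
    have hsub : ∀ a ∈ m - c, f a ∈ Finset.Icc 1 D :=
      fun a ha => hm a (Multiset.mem_of_le (Multiset.sub_le_self m c) ha)
    have hms : ((m - c).map f).sum + (c.map f).sum = (m.map f).sum := by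
      rw [← Multiset.sum_add, ← Multiset.map_add, tsub_add_cancel_of_le hc]
    have hexp : (k + 1) * D.factorial = k * D.factorial + D.factorial := by ring
    obtain ⟨t, ht, hts⟩ := ih (m - c) hsub (by omega)
    refine ⟨t + c, ?_, ?_⟩
    · have h1 : t + c ≤ (m - c) + c := add_le_add_left ht c
      rwa [tsub_add_cancel_of_le hc] at h1
    · rw [Multiset.map_add, Multiset.sum_add, hts, hcs]; ring

variable {R A : Type*} [CommRing R] [CommRing A] [Algebra R A]

lemma prod_pairs_mem (𝒜 : ℕ → Submodule R A) [GradedAlgebra 𝒜] (M : Multiset (ℕ × A))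
    (hM : ∀ p ∈ M, p.2 ∈ 𝒜 p.1) :
    (M.map Prod.snd).prod ∈ 𝒜 (M.map Prod.fst).sum := by
  induction M using Multiset.induction with
  | empty => simpa using SetLike.one_mem_graded 𝒜
  | cons p M ih =>
    simp only [Multiset.map_cons, Multiset.prod_cons, Multiset.sum_cons]
    exact SetLike.mul_mem_graded (hM p (Multiset.mem_cons_self _ _))
      (ih fun q hq => hM q (Multiset.mem_cons_of_mem hq))

lemma main (𝒜 : ℕ → Submodule R A) [GradedAlgebra 𝒜] (D : ℕ) (hD : 0 < D) :
    ∀ (ν : ℕ) (M : Multiset (ℕ × A)),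
      (∀ p ∈ M, p.2 ∈ 𝒜 p.1 ∧ p.1 ∈ Finset.Icc 1 D) →
      (M.map Prod.fst).sum = (D * D.factorial) * ν →
      (M.map Prod.snd).prod ∈
        Algebra.adjoin R ((𝒜 0 : Set A) ∪ (𝒜 (D * D.factorial) : Set A)) := by
  classical
  intro ν
  induction ν with
  | zero =>
    intro M hM hsum
    have hM0 : M = 0 := by
      by_contra h
      obtain ⟨p, hp⟩ := Multiset.exists_mem_of_ne_zero h
      have h1 : 1 ≤ p.1 := (Finset.mem_Icc.mp (hM p hp).2).1
      have h2 : p.1 ≤ (M.map Prod.fst).sum :=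
        Multiset.single_le_sum (fun x _ => Nat.zero_le x) _
          (Multiset.mem_map_of_mem _ hp)
      omega
    subst hM0
    simpa using Subalgebra.one_mem _
  | succ ν ih =>
    intro M hM hsum
    rcases Nat.eq_zero_or_pos ν with hν | hν
    · subst hν
      have hmem : (M.map Prod.snd).prod ∈ 𝒜 (D * D.factorial) := by
        have h := prod_pairs_mem 𝒜 M (fun p hp => (hM p hp).1)
        rw [hsum] at h
        simpa using h
      exact Algebra.subset_adjoin (Set.mem_union_right _ hmem)
    · obtain ⟨t, ht, hts⟩ := chunks D hD Prod.fst D M (fun p hp => (hM p hp).2) (by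
        have h1 : D * D.factorial * 1 ≤ D * D.factorial * ν := Nat.mul_le_mul_left _ hν
        have hexp : D * D.factorial * (ν + 1) = D * D.factorial * ν + D * D.factorial := by ring
        omega)
      have hsplit : (M - t) + t = M := tsub_add_cancel_of_le ht
      have hsum' : ((M - t).map Prod.fst).sum = D * D.factorial * ν := by
        have h5 : ((M - t).map Prod.fst).sum + (t.map Prod.fst).sum = (M.map Prod.fst).sum := by
          rw [← Multiset.sum_add, ← Multiset.map_add, hsplit]
        rw [hsum, hts] at h5
        have hexp : D * D.factorial * (ν + 1) = D * D.factorial * ν + D * D.factorial := by ring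
        omega
      have hrec := ih (M - t)
        (fun p hp => hM p (Multiset.mem_of_le (Multiset.sub_le_self M t) hp)) hsum'
      have hchunk : (t.map Prod.snd).prod ∈ 𝒜 (D * D.factorial) := by
        have h := prod_pairs_mem 𝒜 t (fun p hp => (hM p (Multiset.mem_of_le ht hp)).1)
        rwa [hts] at h
      have h6 : (M.map Prod.snd).prod = ((M - t).map Prod.snd).prod * (t.map Prod.snd).prod := by
        rw [← Multiset.prod_add, ← Multiset.map_add, hsplit]
      rw [h6]
      exact mul_mem hrec (Algebra.subset_adjoin (Set.mem_union_right _ hchunk))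

lemma exists_pairs (𝒜 : ℕ → Submodule R A) (D : ℕ) : ∀ (l : List A),
    (∀ a ∈ l, a ∈ ⋃ i ∈ Set.Iic D, (𝒜 i : Set A)) →
    ∃ pl : List (ℕ × A), pl.map Prod.snd = l ∧ ∀ p ∈ pl, p.2 ∈ 𝒜 p.1 ∧ p.1 ≤ D := by
  intro l
  induction l with
  | nil => exact fun _ => ⟨[], rfl, by simp⟩
  | cons a l ih =>
    intro h
    obtain ⟨i, hiD, hai⟩ := Set.mem_iUnion₂.mp (h a List.mem_cons_self)
    obtain ⟨pl, hpl, hplm⟩ := ih (fun b hb => h b (List.mem_cons_of_mem a hb))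
    refine ⟨(i, a) :: pl, by simp [hpl], ?_⟩
    intro p hp
    rcases List.mem_cons.mp hp with h' | h'
    · subst h'; exact ⟨hai, hiD⟩
    · exact hplm p h'

end Stmt13Aux

/-- Bourbaki: if a positively graded commutative ring `A` is finitely
generated as an `A_0`-algebra, then there is `d > 0` such that the Veronese subring
`A^{(d)}` is generated over `A_0` by `A_d`. -/
theorem stmt13 {R A : Type*} [CommRing R] [CommRing A] [Algebra R A]
    (𝒜 : ℕ → Submodule R A) [GradedAlgebra 𝒜]
    (hfg : ∃ s : Finset A, Algebra.adjoin R ((𝒜 0 : Set A) ∪ ↑s) = ⊤) :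
    ∃ d : ℕ, 0 < d ∧
      Algebra.adjoin R ((𝒜 0 : Set A) ∪ (𝒜 d : Set A))
        = Algebra.adjoin R (⋃ ν : ℕ, (𝒜 (d * ν) : Set A)) := by
  classical
  obtain ⟨s, hs⟩ := hfg
  set D : ℕ := max 1 (s.sup fun x => (DirectSum.decompose 𝒜 x).support.sup id) with hDdef
  have hD : 0 < D := lt_of_lt_of_le Nat.one_pos (le_max_left _ _)
  refine ⟨D * D.factorial, Nat.mul_pos hD D.factorial_pos, ?_⟩
  set d := D * D.factorial with hd
  set S := Algebra.adjoin R ((𝒜 0 : Set A) ∪ (𝒜 d : Set A)) with hSdef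
  set T := ⋃ i ∈ Set.Iic D, (𝒜 i : Set A) with hTdef
  have hTtop : Algebra.adjoin R T = ⊤ := by
    rw [eq_top_iff, ← hs]
    apply Algebra.adjoin_le
    apply Set.union_subset
    · intro a ha
      exact Algebra.subset_adjoin (Set.mem_iUnion₂.mpr ⟨0, Nat.zero_le D, ha⟩)
    · intro x hx
      have hxe : (∑ i ∈ (DirectSum.decompose 𝒜 x).support,
          (DirectSum.decompose 𝒜 x i : A)) = x := DirectSum.sum_support_decompose 𝒜 x
      rw [← hxe]
      apply Subalgebra.sum_mem
      intro i hi
      apply Algebra.subset_adjoin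
      have hiD : i ≤ D := by
        have h1 : i ≤ (DirectSum.decompose 𝒜 x).support.sup id := Finset.le_sup (f := id) hi
        have h2 : (DirectSum.decompose 𝒜 x).support.sup id ≤
            s.sup fun x => (DirectSum.decompose 𝒜 x).support.sup id :=
          Finset.le_sup (f := fun x => (DirectSum.decompose 𝒜 x).support.sup id) hx
        exact le_trans (le_trans h1 h2) (le_max_right _ _)
      exact Set.mem_iUnion₂.mpr ⟨i, hiD, (DirectSum.decompose 𝒜 x i).2⟩
  apply le_antisymm
  · apply Algebra.adjoin_mono
    apply Set.union_subset
    · intro a ha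
      exact Set.mem_iUnion.mpr ⟨0, by simpa using ha⟩
    · intro a ha
      exact Set.mem_iUnion.mpr ⟨1, by simpa using ha⟩
  · apply Algebra.adjoin_le
    rw [Set.iUnion_subset_iff]
    intro ν y hy
    have hy2 : y ∈ Subalgebra.toSubmodule (Algebra.adjoin R T) := by rw [hTtop]; trivial
    rw [Algebra.adjoin_eq_span] at hy2
    have key : ∀ z ∈ Submodule.span R (Submonoid.closure T : Set A),
        GradedAlgebra.proj 𝒜 (d * ν) z ∈ S := by
      intro z hz
      induction hz using Submodule.span_induction with
      | mem w hw =>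
        obtain ⟨l, hl, hlp⟩ := Submonoid.exists_list_of_mem_closure hw
        obtain ⟨pl, hpl, hplm⟩ := Stmt13Aux.exists_pairs 𝒜 D l hl
        set M : Multiset (ℕ × A) := (↑pl : Multiset (ℕ × A)) with hM
        have hprod : (M.map Prod.snd).prod = w := by
          simp only [hM, Multiset.map_coe, Multiset.prod_coe, hpl, hlp]
        have hwn : w ∈ 𝒜 (M.map Prod.fst).sum := by
          rw [← hprod]
          exact Stmt13Aux.prod_pairs_mem 𝒜 M (fun p hp => (hplm p (Multiset.mem_coe.mp hp)).1)
        by_cases hn : (M.map Prod.fst).sum = d * ν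
        · have hproj : GradedAlgebra.proj 𝒜 (d * ν) w = w := by
            rw [GradedAlgebra.proj_apply, DirectSum.decompose_of_mem_same 𝒜 (hn ▸ hwn)]
          rw [hproj]
          set Mp := M.filter (fun p => 0 < p.1) with hMp
          set M0 := M.filter (fun p => ¬ 0 < p.1) with hM0
          have hadd : Mp + M0 = M := Multiset.filter_add_not _ M
          have h0 : (M0.map Prod.snd).prod ∈ S := by
            apply Subalgebra.multiset_prod_mem
            intro x hx
            obtain ⟨p, hp, rfl⟩ := Multiset.mem_map.mp hx
            have hmf := Multiset.mem_filter.mp hp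
            have hp0 : p.1 = 0 := by omega
            have hpA := (hplm p (Multiset.mem_coe.mp hmf.1)).1
            rw [hp0] at hpA
            exact Algebra.subset_adjoin (Set.mem_union_left _ hpA)
          have hsums : (Mp.map Prod.fst).sum = d * ν := by
            have h1 : (Mp.map Prod.fst).sum + (M0.map Prod.fst).sum
                = (M.map Prod.fst).sum := by
              rw [← Multiset.sum_add, ← Multiset.map_add, hadd]
            have h2 : (M0.map Prod.fst).sum = 0 := by
              apply Multiset.sum_eq_zero
              intro x hx
              obtain ⟨p, hp, rfl⟩ := Multiset.mem_map.mp hx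
              have := (Multiset.mem_filter.mp hp).2
              omega
            omega
          have hp' : ∀ p ∈ Mp, p.2 ∈ 𝒜 p.1 ∧ p.1 ∈ Finset.Icc 1 D := by
            intro p hp
            have hmf := Multiset.mem_filter.mp hp
            have h3 := hplm p (Multiset.mem_coe.mp hmf.1)
            exact ⟨h3.1, Finset.mem_Icc.mpr ⟨hmf.2, h3.2⟩⟩
          have hmain := Stmt13Aux.main 𝒜 D hD ν Mp hp' hsums
          have hw2 : w = (Mp.map Prod.snd).prod * (M0.map Prod.snd).prod := by
            rw [← Multiset.prod_add, ← Multiset.map_add, hadd, hprod]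
          rw [hw2]
          exact mul_mem hmain h0
        · have hproj : GradedAlgebra.proj 𝒜 (d * ν) w = 0 := by
            rw [GradedAlgebra.proj_apply, DirectSum.decompose_of_mem_ne 𝒜 hwn hn]
          rw [hproj]
          exact zero_mem S
      | zero => rw [map_zero]; exact zero_mem S
      | add x y hx hy ihx ihy => rw [map_add]; exact add_mem ihx ihy
      | smul r x hx ihx => rw [map_smul]; exact Subalgebra.smul_mem S ihx r
    have hfin := key y hy2
    rwa [GradedAlgebra.proj_apply, DirectSum.decompose_of_mem_same 𝒜 hy] at hfin
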